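/- Let c ∈ {−1, 1}, let I, J ⊆ ℝ be open intervals, D = I × J, and f : I → ℝ, g : J → ℝ smooth with 1 − c f(u) g(v) nowhere zero on D. Fix τ ∈ ℝ, τ ≠ 0, with τ² + c f(u)² ≠ 0 and τ² + c g(v)² ≠ 0 on D, and define the complex-valued functions H = (iτ f + (iτ)^{−1} g)/(1 − c f g), λ = iτ(1 − c f²)/(−τ² − c f²), ν = iτ(1 − c g²)/(−τ² − c g²). Let ω, Q, R : D → ℝ be smooth, and let Ψ : D → SL₂(ℂ) be a smooth solution of ∂_u Ψ = Ψ U, ∂_v Ψ = Ψ V, where U = [[−ω_u/4, −Q e^{−ω/2}],[(1/2)(H + c) λ e^{ω/2}, ω_u/4]] and V = [[ω_v/4, −(1/2)(H − c) ν e^{ω/2}],[R e^{−ω/2}, −ω_v/4]]. Define F = Ψ i′ Ψ* with i′ = [[0,−i],[i,0]] and Ψ* the conjugate transpose. Then F takes values in the Hermitian 2×2 matrices, det F = −1, and with the scalar product ⟨X,Y⟩ = −(1/2)tr(i′ X i′ Yᵀ) on Hermitian matrices: ⟨∂_u F, ∂_u F⟩ = ⟨∂_v F, ∂_v F⟩ =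 0 and 2⟨∂_u F, ∂_v F⟩ = τ²(1 − c f²)(1 − c g²) e^ω/((τ² + c f²)(τ² + c g²)). -/

import Mathlib

open Matrix

noncomputable section

/-- Partial derivative in the first variable. -/
def pd1 (f : ℝ → ℝ → ℝ) (u v : ℝ) : ℝ := deriv (fun x => f x v) u

/-- Partial derivative in the second variable. -/
def pd2 (f : ℝ → ℝ → ℝ) (u v : ℝ) : ℝ := deriv (fun y => f u y) v

/-- Smoothness of a two-variable function on a set. -/
def Smooth2 (f : ℝ → ℝ → ℝ) (s : Set (ℝ × ℝ)) : Prop :=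
  ContDiffOn ℝ (⊤ : ℕ∞) (fun p : ℝ × ℝ => f p.1 p.2) s

/-- Entrywise derivative of a complex-matrix-valued function of a real variable. -/
def mderiv (f : ℝ → Matrix (Fin 2) (Fin 2) ℂ) (x : ℝ) : Matrix (Fin 2) (Fin 2) ℂ :=
  Matrix.of fun i j => deriv (fun t => f t i j) x

/-- The matrix `U` of the complexified Lax pair with two variable spectral parameters. -/
def UmatC6 (c : ℝ) (ω Q : ℝ → ℝ → ℝ) (H : ℝ → ℝ → ℂ) (lam : ℝ → ℂ) (u v : ℝ) :
    Matrix (Fin 2) (Fin 2) ℂ :=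
  !![(↑(-(pd1 ω u v) / 4) : ℂ), (↑(-(Q u v) * Real.exp (-(ω u v) / 2)) : ℂ);
     (1 / 2 : ℂ) * (H u v + (c : ℂ)) * lam u * (↑(Real.exp (ω u v / 2)) : ℂ),
       (↑((pd1 ω u v) / 4) : ℂ)]

/-- The matrix `V` of the complexified Lax pair with two variable spectral parameters. -/
def VmatC6 (c : ℝ) (ω R : ℝ → ℝ → ℝ) (H : ℝ → ℝ → ℂ) (nu : ℝ → ℂ) (u v : ℝ) :
    Matrix (Fin 2) (Fin 2) ℂ :=
  !![(↑((pd2 ω u v) / 4) : ℂ),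
       -((1 / 2 : ℂ) * (H u v - (c : ℂ)) * nu v * (↑(Real.exp (ω u v / 2)) : ℂ));
     (↑(R u v * Real.exp (-(ω u v) / 2)) : ℂ), (↑(-(pd2 ω u v) / 4) : ℂ)]

/-- The matrix `i′`. -/
def imat : Matrix (Fin 2) (Fin 2) ℂ := !![0, -Complex.I; Complex.I, 0]

/-- The scalar product `⟨X,Y⟩ = −(1/2)tr(i′Xi′Yᵀ)` on Hermitian matrices
(the metric of `E⁴₁ = ℍ`). -/
def formH (X Y : Matrix (Fin 2) (Fin 2) ℂ) : ℂ :=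
  -(1 / 2 : ℂ) * (imat * X * imat * Yᵀ).trace


lemma mderiv_sandwich (f : ℝ → Matrix (Fin 2) (Fin 2) ℂ) (C : Matrix (Fin 2) (Fin 2) ℂ)
    (x : ℝ) (hf : ∀ i j, DifferentiableAt ℝ (fun t => f t i j) x) :
    mderiv (fun t => f t * C * (f t)ᴴ) x =
      mderiv f x * C * (f x)ᴴ + f x * C * (mderiv f x)ᴴ := by
  have hd : ∀ i j, HasDerivAt (fun t => f t i j) (mderiv f x i j) x := fun i j =>
    (hf i j).hasDerivAt
  ext i j
  have key : HasDerivAt (fun t => (f t * C * (f t)ᴴ) i j)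
      ((mderiv f x * C * (f x)ᴴ + f x * C * (mderiv f x)ᴴ) i j) x := by
    have e : (fun t => (f t * C * (f t)ᴴ) i j) = fun t =>
        (f t i 0 * C 0 0 + f t i 1 * C 1 0) * star (f t j 0)
        + (f t i 0 * C 0 1 + f t i 1 * C 1 1) * star (f t j 1) := by
      funext t
      simp [Matrix.mul_apply, Fin.sum_univ_two, Matrix.conjTranspose_apply]
    rw [e]
    have h1 := (((hd i 0).mul_const (C 0 0)).add ((hd i 1).mul_const (C 1 0))).mul (hd j 0).star
    have h2 := (((hd i 0).mul_const (C 0 1)).add ((hd i 1).mul_const (C 1 1))).mul (hd j 1).star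
    have h3 := h1.add h2
    refine h3.congr_deriv ?_
    simp [Matrix.mul_apply, Fin.sum_univ_two, Matrix.conjTranspose_apply, Matrix.add_apply]
    ring
  exact key.deriv

lemma imat_conj (X : Matrix (Fin 2) (Fin 2) ℂ) : imat * X * imat = (X.adjugate)ᵀ := by
  ext i j
  fin_cases i <;> fin_cases j <;>
    simp only [Matrix.mul_apply, Fin.sum_univ_two, Matrix.adjugate_fin_two, imat,
      Matrix.cons_val', Matrix.cons_val_zero, Matrix.cons_val_one, Matrix.head_cons,
      Matrix.head_fin_const, Matrix.empty_val', Matrix.cons_val_fin_one, Matrix.of_apply,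
      Matrix.transpose_apply, Fin.isValue, Fin.mk_zero, Fin.mk_one]
  · linear_combination (-(X 1 1)) * Complex.I_sq
  · linear_combination (X 1 0) * Complex.I_sq
  · linear_combination (X 0 1) * Complex.I_sq
  · linear_combination (-(X 0 0)) * Complex.I_sq

lemma form_adj (X Y : Matrix (Fin 2) (Fin 2) ℂ) :
    formH X Y = -(1 / 2 : ℂ) * (Y * X.adjugate).trace := by
  rw [formH, imat_conj, ← Matrix.transpose_mul, Matrix.trace_transpose]

lemma form_congr (P A B : Matrix (Fin 2) (Fin 2) ℂ) (hP : P.det = 1) :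
    formH (P * A * Pᴴ) (P * B * Pᴴ) = formH A B := by
  have hPH : (Pᴴ).det = 1 := by rw [Matrix.det_conjTranspose, hP, star_one]
  have e1 : Pᴴ * (Pᴴ).adjugate = 1 := by rw [Matrix.mul_adjugate, hPH, one_smul]
  have e2 : P.adjugate * P = 1 := by rw [Matrix.adjugate_mul, hP, one_smul]
  rw [form_adj, form_adj]
  congr 1
  rw [Matrix.adjugate_mul_distrib, Matrix.adjugate_mul_distrib]
  have h1 : P * B * Pᴴ * ((Pᴴ).adjugate * (A.adjugate * P.adjugate))
      = P * B * A.adjugate * P.adjugate := by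
    simp only [← mul_assoc]
    rw [mul_assoc (P * B) Pᴴ ((Pᴴ).adjugate), e1, mul_one]
  rw [h1, Matrix.trace_mul_cycle, ← mul_assoc, e2, one_mul]

lemma formH_UU (p q : ℝ) (γ : ℂ) :
    formH (!![(↑(-p) : ℂ), ↑q; γ, ↑p] * imat + imat * (!![(↑(-p) : ℂ), ↑q; γ, ↑p])ᴴ)
      (!![(↑(-p) : ℂ), ↑q; γ, ↑p] * imat + imat * (!![(↑(-p) : ℂ), ↑q; γ, ↑p])ᴴ) = 0 := by
  simp only [formH, Matrix.trace_fin_two, Matrix.mul_apply, Fin.sum_univ_two,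
    Matrix.conjTranspose_apply, Matrix.transpose_apply, Matrix.add_apply, imat,
    Matrix.cons_val', Matrix.cons_val_zero, Matrix.cons_val_one, Matrix.head_cons,
    Matrix.head_fin_const, Matrix.empty_val', Matrix.cons_val_fin_one, Matrix.of_apply,
    Fin.isValue, Complex.ofReal_neg, star_neg, Complex.star_def, Complex.conj_ofReal, map_neg]
  ring

lemma formH_VV (s t : ℝ) (β : ℂ) :
    formH (!![(↑s : ℂ), β; ↑t, ↑(-s)] * imat + imat * (!![(↑s : ℂ), β; ↑t, ↑(-s)])ᴴ)
      (!![(↑s : ℂ), β; ↑t, ↑(-s)] * imat + imat * (!![(↑s : ℂ), β; ↑t, ↑(-s)])ᴴ) = 0 := by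
  simp only [formH, Matrix.trace_fin_two, Matrix.mul_apply, Fin.sum_univ_two,
    Matrix.conjTranspose_apply, Matrix.transpose_apply, Matrix.add_apply, imat,
    Matrix.cons_val', Matrix.cons_val_zero, Matrix.cons_val_one, Matrix.head_cons,
    Matrix.head_fin_const, Matrix.empty_val', Matrix.cons_val_fin_one, Matrix.of_apply,
    Fin.isValue, Complex.ofReal_neg, star_neg, Complex.star_def, Complex.conj_ofReal, map_neg]
  ring

lemma formH_UV (p q s t : ℝ) (γ β : ℂ) :
    2 * formH (!![(↑(-p) : ℂ), ↑q; γ, ↑p] * imat + imat * (!![(↑(-p) : ℂ), ↑q; γ, ↑p])ᴴ)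
      (!![(↑s : ℂ), β; ↑t, ↑(-s)] * imat + imat * (!![(↑s : ℂ), β; ↑t, ↑(-s)])ᴴ)
      = (β - star β) * (star γ - γ) := by
  have h2 : Complex.I ^ 2 = -1 := Complex.I_sq
  have h3 : Complex.I ^ 3 = -Complex.I := by rw [pow_succ, h2]; ring
  have h4 : Complex.I ^ 4 = 1 := by rw [pow_succ, h3]; simp [Complex.I_mul_I]
  simp only [formH, Matrix.trace_fin_two, Matrix.mul_apply, Fin.sum_univ_two,
    Matrix.conjTranspose_apply, Matrix.transpose_apply, Matrix.add_apply, imat,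
    Matrix.cons_val', Matrix.cons_val_zero, Matrix.cons_val_one, Matrix.head_cons,
    Matrix.head_fin_const, Matrix.empty_val', Matrix.cons_val_fin_one, Matrix.of_apply,
    Fin.isValue, Complex.ofReal_neg, star_neg, Complex.star_def, Complex.conj_ofReal, map_neg]
  ring_nf
  simp only [h4, h3, h2]
  ring

lemma imat_herm : imatᴴ = imat := by
  ext i j
  fin_cases i <;> fin_cases j <;> simp [imat]

lemma imat_det : imat.det = -1 := by
  simp [imat, Matrix.det_fin_two_of]

lemma diff1C (c a b E : ℝ) :
    (-((1/2:ℂ) * (Complex.I * (a:ℂ) - (c:ℂ)) * (Complex.I * (b:ℂ)) * (E:ℂ))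
      - star (-((1/2:ℂ) * (Complex.I * (a:ℂ) - (c:ℂ)) * (Complex.I * (b:ℂ)) * (E:ℂ))))
    = Complex.I * (c:ℂ) * (b:ℂ) * (E:ℂ) := by
  simp only [star_neg, star_mul', star_sub, Complex.star_def, _root_.map_mul, _root_.map_sub, map_div₀,
    _root_.map_one, map_ofNat, Complex.conj_ofReal, Complex.conj_I]
  ring

lemma diff2C (c a b E : ℝ) :
    (star ((1/2:ℂ) * (Complex.I * (a:ℂ) + (c:ℂ)) * (Complex.I * (b:ℂ)) * (E:ℂ))
      - (1/2:ℂ) * (Complex.I * (a:ℂ) + (c:ℂ)) * (Complex.I * (b:ℂ)) * (E:ℂ))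
    = -(Complex.I * (c:ℂ) * (b:ℂ) * (E:ℂ)) := by
  simp only [star_mul', star_add, Complex.star_def, _root_.map_mul, _root_.map_add, map_div₀,
    _root_.map_one, map_ofNat, Complex.conj_ofReal, Complex.conj_I]
  ring

lemma frac1 (c a b x y E : ℝ) :
    c * (a/x) * E * (c * (b/y) * E) = c * c * (a * b) * (E * E) / (x * y) := by
  simp only [div_eq_mul_inv, mul_inv]
  ring

lemma scalar_key (c τ F G W : ℝ) (hc : c = -1 ∨ c = 1) (hτ : τ ≠ 0)
    (h2 : τ^2 + c*F^2 ≠ 0) (h3 : τ^2 + c*G^2 ≠ 0)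
    (H lam nu : ℂ)
    (hH : H = (Complex.I * (τ:ℂ) * (F:ℂ) + (Complex.I * (τ:ℂ))⁻¹ * (G:ℂ)) /
        (1 - (c:ℂ) * (F:ℂ) * (G:ℂ)))
    (hlam : lam = Complex.I * (τ:ℂ) * (1 - (c:ℂ) * (F:ℂ)^2) / (-(τ:ℂ)^2 - (c:ℂ) * (F:ℂ)^2))
    (hnu : nu = Complex.I * (τ:ℂ) * (1 - (c:ℂ) * (G:ℂ)^2) / (-(τ:ℂ)^2 - (c:ℂ) * (G:ℂ)^2)) :
    (-((1/2:ℂ) * (H - (c:ℂ)) * nu * ((Real.exp (W/2) : ℝ):ℂ))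
        - star (-((1/2:ℂ) * (H - (c:ℂ)) * nu * ((Real.exp (W/2) : ℝ):ℂ))))
      * (star ((1/2:ℂ) * (H + (c:ℂ)) * lam * ((Real.exp (W/2) : ℝ):ℂ))
        - (1/2:ℂ) * (H + (c:ℂ)) * lam * ((Real.exp (W/2) : ℝ):ℂ))
      = ((τ^2 * (1 - c*F^2) * (1 - c*G^2) * Real.exp W / ((τ^2 + c*F^2) * (τ^2 + c*G^2)) : ℝ) : ℂ) := by
  have hτ' : (τ:ℂ) ≠ 0 := Complex.ofReal_ne_zero.mpr hτ
  have h2c : (-(τ:ℂ)^2 - (c:ℂ) * (F:ℂ)^2) ≠ 0 := by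
    intro h; apply h2
    have : ((τ^2 + c*F^2 : ℝ) : ℂ) = 0 := by push_cast; linear_combination -h
    exact_mod_cast this
  have h3c : (-(τ:ℂ)^2 - (c:ℂ) * (G:ℂ)^2) ≠ 0 := by
    intro h; apply h3
    have : ((τ^2 + c*G^2 : ℝ) : ℂ) = 0 := by push_cast; linear_combination -h
    exact_mod_cast this
  have hi : (Complex.I * (τ:ℂ))⁻¹ = -Complex.I * ((τ:ℂ))⁻¹ := by
    rw [mul_inv, Complex.inv_I]
  have hH2 : H = Complex.I * (((τ*F - G/τ)/(1 - c*F*G) : ℝ) : ℂ) := by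
    rw [hH, hi]; push_cast; ring
  have hlam2 : lam = Complex.I * (((τ*(1-c*F^2)/(-τ^2-c*F^2)) : ℝ) : ℂ) := by
    rw [hlam]; push_cast; field_simp
  have hnu2 : nu = Complex.I * (((τ*(1-c*G^2)/(-τ^2-c*G^2)) : ℝ) : ℂ) := by
    rw [hnu]; push_cast; field_simp
  rw [hH2, hlam2, hnu2, diff1C, diff2C]
  have hE2 : Real.exp (W/2) * Real.exp (W/2) = Real.exp W := by
    rw [← Real.exp_add]; ring_nf
  have hnum : c * c * ((τ*(1-c*G^2)) * (τ*(1-c*F^2))) * (Real.exp (W/2) * Real.exp (W/2))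
      = τ^2 * (1 - c*F^2) * (1 - c*G^2) * Real.exp W := by
    rw [hE2]; rcases hc with rfl | rfl <;> ring
  have hreal : c * (τ*(1-c*G^2)/(-τ^2-c*G^2)) * Real.exp (W/2)
      * (c * (τ*(1-c*F^2)/(-τ^2-c*F^2)) * Real.exp (W/2))
      = τ^2 * (1 - c*F^2) * (1 - c*G^2) * Real.exp W / ((τ^2 + c*F^2) * (τ^2 + c*G^2)) := by
    rw [frac1, hnum, show (-τ^2-c*G^2) * (-τ^2-c*F^2) = (τ^2 + c*F^2) * (τ^2 + c*G^2) from by ring]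
  calc Complex.I * (c:ℂ) * ((τ*(1-c*G^2)/(-τ^2-c*G^2) : ℝ):ℂ) * ((Real.exp (W/2):ℝ):ℂ)
        * -(Complex.I * (c:ℂ) * ((τ*(1-c*F^2)/(-τ^2-c*F^2) : ℝ):ℂ) * ((Real.exp (W/2):ℝ):ℂ))
      = ((c * (τ*(1-c*G^2)/(-τ^2-c*G^2)) * Real.exp (W/2)
          * (c * (τ*(1-c*F^2)/(-τ^2-c*F^2)) * Real.exp (W/2)) : ℝ) : ℂ) := by
        simp only [Complex.ofReal_mul]
        linear_combination (-((c:ℂ) * ((τ*(1-c*G^2)/(-τ^2-c*G^2) : ℝ):ℂ) * ((Real.exp (W/2):ℝ):ℂ)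
          * ((c:ℂ) * ((τ*(1-c*F^2)/(-τ^2-c*F^2) : ℝ):ℂ) * ((Real.exp (W/2):ℝ):ℂ)))) * Complex.I_sq
    _ = _ := Complex.ofReal_inj.mpr hreal

/-- Theorem 6.10: the immersion formula `F^{(1)}[τ] = p_S(Ψ[√−1 τ])` in
de Sitter space `S³₁` from the complexified Lax pair with two variable spectral
parameters: `F = Ψi′Ψ*` is Hermitian with `det F = −1`, and is conformal with
`2⟨F_u,F_v⟩ = τ²(1−cf²)(1−cg²)e^ω/((τ²+cf²)(τ²+cg²))`. -/
theorem statement6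
    (c : ℝ) (hc : c = -1 ∨ c = 1)
    (I J : Set ℝ)
    (hIopen : IsOpen I) (hIint : I.OrdConnected)
    (hJopen : IsOpen J) (hJint : J.OrdConnected)
    (f g : ℝ → ℝ)
    (hf : ContDiffOn ℝ (⊤ : ℕ∞) f I) (hg : ContDiffOn ℝ (⊤ : ℕ∞) g J)
    (hfg : ∀ u ∈ I, ∀ v ∈ J, 1 - c * f u * g v ≠ 0)
    (τ : ℝ) (hτ : τ ≠ 0)
    (hτf : ∀ u ∈ I, τ ^ 2 + c * (f u) ^ 2 ≠ 0)
    (hτg : ∀ v ∈ J, τ ^ 2 + c * (g v) ^ 2 ≠ 0)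
    (H : ℝ → ℝ → ℂ)
    (hH : ∀ u v, H u v =
      (Complex.I * (τ : ℂ) * (f u : ℂ) + (Complex.I * (τ : ℂ))⁻¹ * (g v : ℂ)) /
        (1 - (c : ℂ) * (f u : ℂ) * (g v : ℂ)))
    (lam : ℝ → ℂ)
    (hlam : ∀ u, lam u =
      Complex.I * (τ : ℂ) * (1 - (c : ℂ) * (f u : ℂ) ^ 2) /
        (-(τ : ℂ) ^ 2 - (c : ℂ) * (f u : ℂ) ^ 2))
    (nu : ℝ → ℂ)
    (hnu : ∀ v, nu v =
      Complex.I * (τ : ℂ) * (1 - (c : ℂ) * (g v : ℂ) ^ 2) /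
        (-(τ : ℂ) ^ 2 - (c : ℂ) * (g v : ℂ) ^ 2))
    (ω Q R : ℝ → ℝ → ℝ)
    (hω : Smooth2 ω (I ×ˢ J)) (hQ : Smooth2 Q (I ×ˢ J)) (hR : Smooth2 R (I ×ˢ J))
    (Ψ : ℝ → ℝ → Matrix (Fin 2) (Fin 2) ℂ)
    (hΨsmooth : ∀ i j, ContDiffOn ℝ (⊤ : ℕ∞) (fun p : ℝ × ℝ => Ψ p.1 p.2 i j) (I ×ˢ J))
    (hΨdet : ∀ u ∈ I, ∀ v ∈ J, (Ψ u v).det = 1)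
    (hLaxU : ∀ u ∈ I, ∀ v ∈ J,
      mderiv (fun x => Ψ x v) u = Ψ u v * UmatC6 c ω Q H lam u v)
    (hLaxV : ∀ u ∈ I, ∀ v ∈ J,
      mderiv (fun y => Ψ u y) v = Ψ u v * VmatC6 c ω R H nu u v)
    (F : ℝ → ℝ → Matrix (Fin 2) (Fin 2) ℂ)
    (hF : ∀ u v, F u v = Ψ u v * imat * (Ψ u v)ᴴ) :
    ∀ u ∈ I, ∀ v ∈ J,
      (F u v).IsHermitian ∧
      (F u v).det = -1 ∧
      formH (mderiv (fun x => F x v) u) (mderiv (fun x => F x v) u) = 0 ∧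
      formH (mderiv (fun y => F u y) v) (mderiv (fun y => F u y) v) = 0 ∧
      2 * formH (mderiv (fun x => F x v) u) (mderiv (fun y => F u y) v)
        = ((τ ^ 2 * (1 - c * (f u) ^ 2) * (1 - c * (g v) ^ 2) * Real.exp (ω u v) /
            ((τ ^ 2 + c * (f u) ^ 2) * (τ ^ 2 + c * (g v) ^ 2)) : ℝ) : ℂ) := by
  intro u hu v hv
  have hopen : IsOpen (I ×ˢ J) := hIopen.prod hJopen
  have hmem : (u, v) ∈ I ×ˢ J := ⟨hu, hv⟩
  have hdU : ∀ i j, DifferentiableAt ℝ (fun x => Ψ x v i j) u := by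
    intro i j
    have h1 : DifferentiableAt ℝ (fun p : ℝ × ℝ => Ψ p.1 p.2 i j) (u, v) :=
      ((hΨsmooth i j).contDiffAt (hopen.mem_nhds hmem)).differentiableAt (by simp)
    have h2 : DifferentiableAt ℝ (fun x : ℝ => (x, v)) u :=
      differentiableAt_id.prodMk (differentiableAt_const v)
    exact h1.comp u h2
  have hdV : ∀ i j, DifferentiableAt ℝ (fun y => Ψ u y i j) v := by
    intro i j
    have h1 : DifferentiableAt ℝ (fun p : ℝ × ℝ => Ψ p.1 p.2 i j) (u, v) :=
      ((hΨsmooth i j).contDiffAt (hopen.mem_nhds hmem)).differentiableAt (by simp)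
    have h2 : DifferentiableAt ℝ (fun y : ℝ => (u, y)) v :=
      (differentiableAt_const u).prodMk differentiableAt_id
    exact h1.comp v h2
  have hdet := hΨdet u hu v hv
  have hFu : mderiv (fun x => F x v) u
      = Ψ u v * (UmatC6 c ω Q H lam u v * imat + imat * (UmatC6 c ω Q H lam u v)ᴴ)
          * (Ψ u v)ᴴ := by
    have e : (fun x => F x v) = fun x => Ψ x v * imat * (Ψ x v)ᴴ := funext fun x => hF x v
    rw [e, mderiv_sandwich (fun x => Ψ x v) imat u hdU, hLaxU u hu v hv,
      Matrix.conjTranspose_mul]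
    noncomm_ring
  have hFv : mderiv (fun y => F u y) v
      = Ψ u v * (VmatC6 c ω R H nu u v * imat + imat * (VmatC6 c ω R H nu u v)ᴴ)
          * (Ψ u v)ᴴ := by
    have e : (fun y => F u y) = fun y => Ψ u y * imat * (Ψ u y)ᴴ := funext fun y => hF u y
    rw [e, mderiv_sandwich (fun y => Ψ u y) imat v hdV, hLaxV u hu v hv,
      Matrix.conjTranspose_mul]
    noncomm_ring
  have e1 : (-(pd1 ω u v) / 4 : ℝ) = -(pd1 ω u v / 4) := by ring
  have e2 : (-(pd2 ω u v) / 4 : ℝ) = -(pd2 ω u v / 4) := by ring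
  refine ⟨?_, ?_, ?_, ?_, ?_⟩
  · rw [Matrix.IsHermitian, hF]
    simp [Matrix.conjTranspose_mul, imat_herm, Matrix.mul_assoc]
  · rw [hF]
    simp [Matrix.det_mul, Matrix.det_conjTranspose, hdet, imat_det]
  · rw [hFu, form_congr _ _ _ hdet]
    simp only [UmatC6]
    rw [e1]
    exact formH_UU _ _ _
  · rw [hFv, form_congr _ _ _ hdet]
    simp only [VmatC6]
    rw [e2]
    exact formH_VV _ _ _
  · rw [hFu, hFv, form_congr _ _ _ hdet]
    simp only [UmatC6, VmatC6]
    rw [e1, e2, formH_UV]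
    exact scalar_key c τ (f u) (g v) (ω u v) hc hτ (hτf u hu) (hτg v hv)
      (H u v) (lam u) (nu v) (hH u v) (hlam u) (hnu v)
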